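/- Suppose G_1, …, G_K and G_z are positive definite Hermitian M×M complex matrices and W_s ∈ ℂ^{M×K} is fixed. If W_z and W_z′ in ℂ^{M×(M−K)} both make [W_s, W_z] and [W_s, W_z′] invertible and both satisfy the stationary condition, i.e., [W_s, W_z]^H G_z W_z = E_z and [W_s, W_z′]^H G_z W_z′ = E_z, then J_W([W_s, W_z]) = J_W([W_s, W_z′]); that is, J_W takes the same value at all stationary points with respect to W_z. -/

import Mathlib

/- STATEMENT 4.
M×M complex matrices are encoded as matrices indexed by `Fin K ⊕ Fin L`,
where `M = K + L`, `K ≥ 1`, `L = M - K ≥ 1`. `[W_s, W_z]` is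
`Matrix.fromCols W_s W_z` and `E_z = [e_{K+1}, …, e_M]`. -/

open Matrix
open scoped ComplexOrder

/-- `E_z = [e_{K+1}, …, e_M]`. -/
def Ez (K L : ℕ) : Matrix (Fin K ⊕ Fin L) (Fin L) ℂ :=
  Matrix.of fun i j => if i = Sum.inr j then 1 else 0

lemma Ez_eq (K L : ℕ) : Ez K L = Matrix.fromRows (0 : Matrix (Fin K) (Fin L) ℂ) (1 : Matrix (Fin L) (Fin L) ℂ) := by
  ext i j
  cases i with
  | inl i => simp [Ez, Matrix.fromRows_apply_inl]
  | inr i => simp [Ez, Matrix.fromRows_apply_inr, Matrix.one_apply, Sum.inr.injEq, eq_comm]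

-- decomposition of stationary condition
lemma stat_decomp {K L : ℕ} (Gz : Matrix (Fin K ⊕ Fin L) (Fin K ⊕ Fin L) ℂ)
    (Ws : Matrix (Fin K ⊕ Fin L) (Fin K) ℂ) (Wz : Matrix (Fin K ⊕ Fin L) (Fin L) ℂ)
    (hst : (Matrix.fromCols Ws Wz)ᴴ * Gz * Wz = Ez K L) :
    Wsᴴ * Gz * Wz = 0 ∧ Wzᴴ * Gz * Wz = 1 := by
  rw [Ez_eq, conjTranspose_fromCols_eq_fromRows_conjTranspose, fromRows_mul, fromRows_mul,
    fromRows_ext_iff] at hst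
  exact hst

lemma key_det {K L : ℕ} {Gz : Matrix (Fin K ⊕ Fin L) (Fin K ⊕ Fin L) ℂ}
    (hGz : Gz.PosDef)
    (Ws : Matrix (Fin K ⊕ Fin L) (Fin K) ℂ)
    (Wz Wz' : Matrix (Fin K ⊕ Fin L) (Fin L) ℂ)
    (hWz : IsUnit (Matrix.fromCols Ws Wz).det)
    (hst : (Matrix.fromCols Ws Wz)ᴴ * Gz * Wz = Ez K L)
    (hst' : (Matrix.fromCols Ws Wz')ᴴ * Gz * Wz' = Ez K L) :
    ‖(Matrix.fromCols Ws Wz').det‖ = ‖(Matrix.fromCols Ws Wz).det‖ := by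
  obtain ⟨h1, h2⟩ := stat_decomp Gz Ws Wz hst
  obtain ⟨h1', h2'⟩ := stat_decomp Gz Ws Wz' hst'
  set U : Matrix (Fin L) (Fin L) ℂ := Wzᴴ * Gz * Wz' with hU
  -- Wz' = Wz * U
  have hcan : IsUnit ((Matrix.fromCols Ws Wz)ᴴ * Gz) := by
    exact ((Matrix.isUnit_iff_isUnit_det _).mpr (by simpa using hWz)).mul hGz.isUnit
  have hWzU : Wz' = Wz * U := by
    have e1 : (Matrix.fromCols Ws Wz)ᴴ * Gz * Wz' =
        (Matrix.fromCols Ws Wz)ᴴ * Gz * (Wz * U) := by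
      rw [← Matrix.mul_assoc ((Matrix.fromCols Ws Wz)ᴴ * Gz) Wz U, hst, Ez_eq,
        conjTranspose_fromCols_eq_fromRows_conjTranspose, fromRows_mul, fromRows_mul,
        fromRows_mul]
      rw [h1', Matrix.zero_mul, Matrix.one_mul]
    have : Invertible ((Matrix.fromCols Ws Wz)ᴴ * Gz) := hcan.invertible
    exact Matrix.mul_right_injective_of_invertible _ e1
  -- U is unitary
  have hUU : Uᴴ * U = 1 := by
    have : Uᴴ = Wz'ᴴ * Gz * Wz := by
      rw [hU]
      simp [Matrix.conjTranspose_mul, hGz.isHermitian.eq, Matrix.mul_assoc]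
    rw [this, Matrix.mul_assoc, ← hWzU]
    rw [Matrix.mul_assoc] at h2'
    rw [Matrix.mul_assoc, h2']
  have hdetU : ‖U.det‖ = 1 := by
    have : star U.det * U.det = 1 := by
      have := congrArg Matrix.det hUU
      rwa [Matrix.det_mul, Matrix.det_conjTranspose, Matrix.det_one] at this
    have habs : ‖U.det‖ * ‖U.det‖ = 1 := by
      have := congrArg (‖·‖) this
      simpa using this
    nlinarith [norm_nonneg U.det]
  have hdet : (Matrix.fromCols Ws Wz').det = (Matrix.fromCols Ws Wz).det * U.det := by
    have : Matrix.fromCols Ws Wz' =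
        Matrix.fromCols Ws Wz * Matrix.fromBlocks 1 0 0 U := by
      rw [fromCols_mul_fromBlocks]
      simp [hWzU]
    rw [this, Matrix.det_mul, Matrix.det_fromBlocks_zero₂₁]
    simp
  rw [hdet, norm_mul, hdetU, mul_one]


/-- The cost function
`J_W(W) = Σ_{k=1}^K w_k^H G_k w_k + trace(W_z^H G_z W_z) − 2 log|det W|`. -/
noncomputable def JW {K L : ℕ}
    (G : Fin K → Matrix (Fin K ⊕ Fin L) (Fin K ⊕ Fin L) ℂ)
    (Gz : Matrix (Fin K ⊕ Fin L) (Fin K ⊕ Fin L) ℂ)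
    (W : Matrix (Fin K ⊕ Fin L) (Fin K ⊕ Fin L) ℂ) : ℝ :=
  (∑ k : Fin K,
      (star (fun i => W i (Sum.inl k)) ⬝ᵥ ((G k) *ᵥ (fun i => W i (Sum.inl k))))).re
    + (Matrix.trace ((W.submatrix id Sum.inr)ᴴ * Gz * (W.submatrix id Sum.inr))).re
    - 2 * Real.log ‖W.det‖

/-- If `W_z` and `W_z'` both make `[W_s, ·]` invertible and both satisfy the
stationary condition `[W_s, ·]ᴴ G_z · = E_z`, then `J_W` takes the same value at
`[W_s, W_z]` and `[W_s, W_z']`. -/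
theorem JW_eq_on_stationary_points (K L : ℕ) (hK : 1 ≤ K) (hL : 1 ≤ L)
    (G : Fin K → Matrix (Fin K ⊕ Fin L) (Fin K ⊕ Fin L) ℂ)
    (Gz : Matrix (Fin K ⊕ Fin L) (Fin K ⊕ Fin L) ℂ)
    (hG : ∀ k, (G k).PosDef) (hGz : Gz.PosDef)
    (Ws : Matrix (Fin K ⊕ Fin L) (Fin K) ℂ)
    (Wz Wz' : Matrix (Fin K ⊕ Fin L) (Fin L) ℂ)
    (hWz : IsUnit (Matrix.fromCols Ws Wz).det)
    (hWz' : IsUnit (Matrix.fromCols Ws Wz').det)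
    (hst : (Matrix.fromCols Ws Wz)ᴴ * Gz * Wz = Ez K L)
    (hst' : (Matrix.fromCols Ws Wz')ᴴ * Gz * Wz' = Ez K L) :
    JW G Gz (Matrix.fromCols Ws Wz) = JW G Gz (Matrix.fromCols Ws Wz') := by
  obtain ⟨h1, h2⟩ := stat_decomp Gz Ws Wz hst
  obtain ⟨h1', h2'⟩ := stat_decomp Gz Ws Wz' hst'
  have hsub : ∀ (X : Matrix (Fin K ⊕ Fin L) (Fin L) ℂ),
      (Matrix.fromCols Ws X).submatrix id Sum.inr = X := by
    intro X; ext i j; rfl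
  have hcol : ∀ (X : Matrix (Fin K ⊕ Fin L) (Fin L) ℂ) (k : Fin K),
      (fun i => (Matrix.fromCols Ws X) i (Sum.inl k)) = fun i => Ws i k := by
    intro X k; funext i; rfl
  unfold JW
  rw [hsub Wz, hsub Wz']
  rw [h2, h2']
  simp only [hcol]
  rw [key_det hGz Ws Wz Wz' hWz hst hst']
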